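/- Let P be a finite poset and J(P) its lattice of order ideals. Consider the ℂ-algebra homomorphism π from the polynomial ring ℂ[p_τ : τ ∈ J(P)] to the polynomial ring ℂ[t, x_u : u ∈ P] determined by π(p_τ) = t · Π_{u ∈ τ} x_u. Then the kernel of π is generated, as an ideal, by the binomials p_α p_β − p_{α∪β} p_{α∩β} for all pairs of incomparable α, β ∈ J(P). (Thus the Hibi algebra A_{J(P)} = ℂ[J(P)]/ker π, the homogeneous coordinate ring of the Hibi toric variety ℙ_{Δ(P)}, is defined by quadratic binomials.) -/

import Mathlib

open MvPolynomial

namespace HibiAux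

noncomputable section
open scoped Classical
set_option linter.unusedSectionVars false

variable {P : Type*} [PartialOrder P] [Fintype P]

abbrev J (P : Type*) [PartialOrder P] := {τ : Set P // IsLowerSet τ}

def ind (τ : J P) (u : P) : ℕ := Set.indicator (τ : Set P) (fun _ => 1) u

def eV (τ : J P) : Option P →₀ ℕ :=
  Finsupp.equivFunOnFinite.symm (fun o => Option.elim o 1 (ind τ))

lemma eV_apply (τ : J P) (o : Option P) : eV τ o = Option.elim o 1 (ind τ) := rfl

def unionJ (α β : J P) : J P := ⟨(α : Set P) ∪ (β : Set P), α.2.union β.2⟩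
def interJ (α β : J P) : J P := ⟨(α : Set P) ∩ (β : Set P), α.2.inter β.2⟩

lemma eV_union_add_inter (α β : J P) :
    eV (unionJ α β) + eV (interJ α β) = eV α + eV β := by
  ext o
  cases o with
  | none => rfl
  | some u =>
      simp only [Finsupp.add_apply, eV_apply, Option.elim, ind, unionJ, interJ]
      by_cases ha : u ∈ (α : Set P) <;> by_cases hb : u ∈ (β : Set P) <;>
        simp [Set.indicator_apply, ha, hb]

def Emap : (J P →₀ ℕ) →+ (Option P →₀ ℕ) :=
  Finsupp.liftAddHom fun τ => (smulAddHom ℕ (Option P →₀ ℕ)).flip (eV τ)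

@[simp] lemma Emap_single (τ : J P) (n : ℕ) :
    Emap (Finsupp.single τ n) = n • eV τ :=
  Finsupp.liftAddHom_apply_single _ _ _

lemma Emap_apply (d : J P →₀ ℕ) : Emap d = d.sum fun τ n => n • eV τ :=
  rfl


lemma Emap_none (d : J P →₀ ℕ) : Emap d none = d.sum fun _ n => n := by
  rw [Emap_apply, Finsupp.sum_apply]
  exact Finsupp.sum_congr fun τ _ => by simp [eV_apply]

lemma Emap_some (d : J P →₀ ℕ) (u : P) :
    Emap d (some u) = d.sum fun τ n => n * ind τ u := by
  rw [Emap_apply, Finsupp.sum_apply]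
  exact Finsupp.sum_congr fun τ _ => by simp [eV_apply]

lemma eq_zero_of_total (d : J P →₀ ℕ) (h : Emap d none = 0) : d = 0 := by
  rw [Emap_none] at h
  ext τ
  by_cases hτ : τ ∈ d.support
  · exact absurd ((Finset.sum_eq_zero_iff).1 h τ hτ) (Finsupp.mem_support_iff.1 hτ)
  · simpa using Finsupp.notMem_support_iff.1 hτ

def vmap (P : Type*) [PartialOrder P] [Fintype P] : J P → MvPolynomial (Option P) ℂ :=
  fun τ => X (none : Option P) *
    ∏ u : P, X (some u) ^ Set.indicator (τ : Set P) (fun _ => (1 : ℕ)) u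

lemma X_as_monomial {σ : Type*} (n : σ) :
    (X n : MvPolynomial σ ℂ) = monomial (Finsupp.single n 1) 1 := rfl

lemma vmap_eq (τ : J P) : vmap P τ = monomial (eV τ) 1 := by
  rw [vmap]
  simp only [X_pow_eq_monomial]
  rw [X_as_monomial, ← monomial_sum_one, monomial_mul, one_mul]
  have : Finsupp.single (none : Option P) 1 + ∑ u : P, Finsupp.single (some u) (Set.indicator (τ : Set P) (fun _ => (1:ℕ)) u) = eV τ := by
    ext o
    cases o with
    | none => simp [Finsupp.single_apply, eV_apply]
    | some u => simp [Finsupp.single_apply, eV_apply, ind]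
  rw [this]


lemma aeval_vmap_monomial (d : J P →₀ ℕ) (c : ℂ) :
    aeval (vmap P) (monomial d c) = monomial (Emap d) c := by
  rw [aeval_monomial]
  have h : (d.prod fun τ n => vmap P τ ^ n) = monomial (Emap d) 1 := by
    rw [Emap_apply, Finsupp.sum, monomial_sum_one, Finsupp.prod]
    exact Finset.prod_congr rfl fun τ _ => by rw [vmap_eq, monomial_pow, one_pow]
  rw [h, algebraMap_eq, C_mul_monomial, mul_one]

def hibiSet (P : Type*) [PartialOrder P] [Fintype P] : Set (MvPolynomial (J P) ℂ) :=
  {f | ∃ α β : J P, (¬ α ≤ β ∧ ¬ β ≤ α) ∧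
      f = X α * X β - X (unionJ α β) * X (interJ α β)}

def ChainD (d : J P →₀ ℕ) : Prop :=
  ∀ α ∈ d.support, ∀ β ∈ d.support, α ≤ β ∨ β ≤ α

lemma exists_greatest (d : J P →₀ ℕ) (hd : ChainD d) (hne : d.support.Nonempty) :
    ∃ M ∈ d.support, ∀ τ ∈ d.support, τ ≤ M := by
  obtain ⟨M, hM, hmax⟩ := Set.Finite.exists_maximalFor id (↑d.support : Set (J P))
    (d.support.finite_toSet) (by exact_mod_cast hne)
  refine ⟨M, hM, fun τ hτ => ?_⟩
  rcases hd τ hτ M hM with h | h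
  · exact h
  · exact hmax hτ h

lemma mem_greatest_iff (d : J P →₀ ℕ) {M : J P} (hM : M ∈ d.support)
    (hmax : ∀ τ ∈ d.support, τ ≤ M) (u : P) :
    u ∈ (M : Set P) ↔ 1 ≤ Emap d (some u) := by
  rw [Emap_some]
  constructor
  · intro hu
    have h1 : 1 ≤ d M * ind M u := by
      have : ind M u = 1 := by simp [ind, Set.indicator_apply, hu]
      rw [this, mul_one]
      exact Nat.one_le_iff_ne_zero.2 (Finsupp.mem_support_iff.1 hM)
    calc 1 ≤ d M * ind M u := h1
    _ ≤ d.sum fun τ n => n * ind τ u :=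
      Finset.single_le_sum (f := fun τ => d τ * ind τ u) (fun τ _ => Nat.zero_le _) hM
  · intro h
    by_contra hu
    have : (d.sum fun τ n => n * ind τ u) = 0 := by
      refine Finset.sum_eq_zero fun τ hτ => ?_
      have : u ∉ (τ : Set P) := fun hmem => hu (hmax τ hτ hmem)
      simp [ind, Set.indicator_apply, this]
    omega

lemma decomp (d : J P →₀ ℕ) {τ : J P} (h : 1 ≤ d τ) :
    d = (d - Finsupp.single τ 1) + Finsupp.single τ 1 := by
  ext a
  rw [Finsupp.add_apply, Finsupp.tsub_apply]
  rcases eq_or_ne τ a with rfl | hne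
  · simp only [Finsupp.single_eq_same]; omega
  · simp [Finsupp.single_eq_of_ne' hne]

lemma emap_injOn : ∀ (n : ℕ) (d e : J P →₀ ℕ), ChainD d → ChainD e →
    Emap d = Emap e → Emap d none = n → d = e := by
  intro n
  induction n with
  | zero =>
      intro d e _ _ hde h0
      rw [eq_zero_of_total d h0, eq_zero_of_total e (by rw [← hde]; exact h0)]
  | succ n ih =>
      intro d e hd he hde h0
      have hdne : d.support.Nonempty := by
        rcases Finset.eq_empty_or_nonempty d.support with h | h
        · rw [Finsupp.support_eq_empty.1 h] at h0; simp at h0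
        · exact h
      have hene : e.support.Nonempty := by
        rcases Finset.eq_empty_or_nonempty e.support with h | h
        · rw [Finsupp.support_eq_empty.1 h] at hde
          rw [eq_zero_of_total d (by rw [hde]; simp)] at h0
          simp at h0
        · exact h
      obtain ⟨M, hM, hMmax⟩ := exists_greatest d hd hdne
      obtain ⟨M', hM', hM'max⟩ := exists_greatest e he hene
      have hMM : M = M' := by
        apply Subtype.ext
        ext u
        rw [mem_greatest_iff d hM hMmax u, mem_greatest_iff e hM' hM'max u, hde]
      subst hMM
      have h1 : 1 ≤ d M := Nat.one_le_iff_ne_zero.2 (Finsupp.mem_support_iff.1 hM)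
      have h1' : 1 ≤ e M := Nat.one_le_iff_ne_zero.2 (Finsupp.mem_support_iff.1 hM')
      set c := d - Finsupp.single M 1 with hc
      set c' := e - Finsupp.single M 1 with hc'
      have hdc : d = c + Finsupp.single M 1 := decomp d h1
      have hec : e = c' + Finsupp.single M 1 := decomp e h1'
      have hcc : ChainD c := fun α hα β hβ =>
        hd α (Finsupp.support_tsub hα) β (Finsupp.support_tsub hβ)
      have hcc' : ChainD c' := fun α hα β hβ =>
        he α (Finsupp.support_tsub hα) β (Finsupp.support_tsub hβ)
      have hEc : Emap c = Emap c' := by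
        have := hde
        rw [hdc, hec, map_add, map_add] at this
        exact add_right_cancel this
      have hEn : Emap c none = n := by
        have := h0
        rw [hdc, map_add, Finsupp.add_apply, Emap_single, one_smul, eV_apply] at this
        simpa using Nat.succ_injective this
      rw [hdc, hec, ih c c' hcc hcc' hEc hEn]

def Wt (d : J P →₀ ℕ) : ℕ := d.sum fun τ n => n * (Set.ncard (τ : Set P))^2

lemma Wt_add (d e : J P →₀ ℕ) : Wt (d + e) = Wt d + Wt e :=
  Finsupp.sum_add_index' (fun τ => by simp) (fun τ m n => by ring)

lemma Wt_single (τ : J P) : Wt (Finsupp.single τ 1) = (Set.ncard (τ : Set P))^2 := by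
  rw [Wt, Finsupp.sum_single_index] <;> simp

lemma Wt_le (d : J P →₀ ℕ) : Wt d ≤ (Emap d none) * (Fintype.card P)^2 := by
  rw [Emap_none, Wt, Finsupp.sum, Finsupp.sum, Finset.sum_mul]
  refine Finset.sum_le_sum fun τ _ => ?_
  have h : Set.ncard (τ : Set P) ≤ Fintype.card P := by
    simpa [Set.ncard_univ] using Set.ncard_le_ncard (Set.subset_univ (τ : Set P))
      (Set.finite_univ)
  exact Nat.mul_le_mul_left _ (Nat.pow_le_pow_left h 2)

lemma sq_ineq {a b s i : ℕ} (ha : a < s) (hb : b < s) (h : s + i = a + b) :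
    a^2 + b^2 + 1 ≤ s^2 + i^2 := by nlinarith

lemma straighten_aux : ∀ (k : ℕ) (d : J P →₀ ℕ),
    (Emap d none) * (Fintype.card P)^2 + 1 - Wt d ≤ k →
    ∃ e, ChainD e ∧ Emap e = Emap d ∧
      (monomial d 1 - monomial e 1 : MvPolynomial (J P) ℂ) ∈ Ideal.span (hibiSet P) := by
  intro k
  induction k with
  | zero =>
      intro d hk
      have := Wt_le d
      omega
  | succ k ih =>
      intro d hk
      by_cases hc : ChainD d
      · exact ⟨d, hc, rfl, by simp⟩
      · rw [ChainD] at hc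
        push_neg at hc
        obtain ⟨α, hα, β, hβ, hαβ1, hαβ2⟩ := hc
        have hne : α ≠ β := fun h => hαβ1 (h ▸ le_refl α)
        have h1 : 1 ≤ d α := Nat.one_le_iff_ne_zero.2 (Finsupp.mem_support_iff.1 hα)
        have h1' : 1 ≤ d β := Nat.one_le_iff_ne_zero.2 (Finsupp.mem_support_iff.1 hβ)
        set c := d - Finsupp.single α 1 - Finsupp.single β 1 with hcdef
        have hdc : d = c + Finsupp.single α 1 + Finsupp.single β 1 := by
          ext a
          simp only [Finsupp.add_apply, hcdef, Finsupp.tsub_apply]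
          rcases eq_or_ne α a with rfl | h1a
          · have : β ≠ α := fun h => hne h.symm
            simp only [Finsupp.single_eq_same, Finsupp.single_eq_of_ne' this]
            omega
          · rcases eq_or_ne β a with rfl | h2a
            · simp only [Finsupp.single_eq_same, Finsupp.single_eq_of_ne' h1a]
              omega
            · simp [Finsupp.single_eq_of_ne' h1a, Finsupp.single_eq_of_ne' h2a]
        set d2 := c + Finsupp.single (unionJ α β) 1 + Finsupp.single (interJ α β) 1 with hd2
        have hE2 : Emap d2 = Emap d := by
          rw [hd2, hdc]
          simp only [map_add, Emap_single, one_smul]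
          rw [add_assoc, add_assoc, eV_union_add_inter]
        -- cardinalities
        have hfin : ∀ s : Set P, s.Finite := fun s => s.toFinite
        have hssα : (α : Set P) ⊂ (α : Set P) ∪ (β : Set P) := by
          refine (Set.ssubset_iff_of_subset Set.subset_union_left).2 ?_
          obtain ⟨u, hu1, hu2⟩ := Set.not_subset.1 (fun h => hαβ2 h)
          exact ⟨u, Set.mem_union_right _ hu1, hu2⟩
        have hssβ : (β : Set P) ⊂ (α : Set P) ∪ (β : Set P) := by
          refine (Set.ssubset_iff_of_subset Set.subset_union_right).2 ?_
          obtain ⟨u, hu1, hu2⟩ := Set.not_subset.1 (fun h => hαβ1 h)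
          exact ⟨u, Set.mem_union_left _ hu1, hu2⟩
        have hca : Set.ncard (α : Set P) < Set.ncard ((α : Set P) ∪ (β : Set P)) :=
          Set.ncard_lt_ncard hssα (hfin _)
        have hcb : Set.ncard (β : Set P) < Set.ncard ((α : Set P) ∪ (β : Set P)) :=
          Set.ncard_lt_ncard hssβ (hfin _)
        have hsum : Set.ncard ((α : Set P) ∪ (β : Set P)) +
            Set.ncard ((α : Set P) ∩ (β : Set P)) =
            Set.ncard (α : Set P) + Set.ncard (β : Set P) :=
          Set.ncard_union_add_ncard_inter _ _ (hfin _) (hfin _)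
        have hWt : Wt d + 1 ≤ Wt d2 := by
          rw [hd2, hdc, Wt_add, Wt_add, Wt_add, Wt_add, Wt_single, Wt_single,
            Wt_single, Wt_single]
          have : Set.ncard (α : Set P)^2 + Set.ncard (β : Set P)^2 + 1 ≤
              Set.ncard ((α : Set P) ∪ (β : Set P))^2 +
              Set.ncard ((α : Set P) ∩ (β : Set P))^2 := by
            exact sq_ineq hca hcb hsum
          have hu : Set.ncard ((unionJ α β : J P) : Set P) =
              Set.ncard ((α : Set P) ∪ (β : Set P)) := rfl
          have hi : Set.ncard ((interJ α β : J P) : Set P) =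
              Set.ncard ((α : Set P) ∩ (β : Set P)) := rfl
          rw [hu, hi]
          omega
        have hmem : (monomial d 1 - monomial d2 1 : MvPolynomial (J P) ℂ) ∈
            Ideal.span (hibiSet P) := by
          have hkey : (monomial d 1 - monomial d2 1 : MvPolynomial (J P) ℂ) =
              monomial c 1 * (X α * X β - X (unionJ α β) * X (interJ α β)) := by
            rw [mul_sub]
            simp only [X_as_monomial, monomial_mul, one_mul, mul_one]
            rw [hdc, hd2]
            rw [add_assoc, add_assoc]
          rw [hkey]
          exact Ideal.mul_mem_left _ _ (Ideal.subset_span ⟨α, β, ⟨hαβ1, hαβ2⟩, rfl⟩)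
        obtain ⟨e, he1, he2, he3⟩ := ih d2 (by
          rw [hE2]
          have := Wt_le d
          omega)
        refine ⟨e, he1, by rw [he2, hE2], ?_⟩
        have : (monomial d 1 - monomial e 1 : MvPolynomial (J P) ℂ) =
            (monomial d 1 - monomial d2 1) + (monomial d2 1 - monomial e 1) := by ring
        rw [this]
        exact Ideal.add_mem _ hmem he3

lemma straighten (d : J P →₀ ℕ) :
    ∃ e, ChainD e ∧ Emap e = Emap d ∧
      (monomial d 1 - monomial e 1 : MvPolynomial (J P) ℂ) ∈ Ideal.span (hibiSet P) :=
  straighten_aux _ d le_rfl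

lemma span_le_ker :
    Ideal.span (hibiSet P) ≤ RingHom.ker (aeval (vmap P) :
      MvPolynomial (J P) ℂ →ₐ[ℂ] MvPolynomial (Option P) ℂ) := by
  rw [Ideal.span_le]
  rintro f ⟨α, β, h, rfl⟩
  simp only [SetLike.mem_coe, RingHom.mem_ker, map_sub, map_mul, aeval_X]
  rw [sub_eq_zero, vmap_eq, vmap_eq, vmap_eq, vmap_eq, monomial_mul, monomial_mul,
    eV_union_add_inter, mul_one]

lemma chain_poly_eq_zero (h : MvPolynomial (J P) ℂ)
    (hchain : ∀ d ∈ h.support, ChainD d)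
    (h0 : aeval (vmap P) h = 0) : h = 0 := by
  by_contra hne
  obtain ⟨d0, hd0⟩ := Finset.nonempty_iff_ne_empty.2
    (fun habs => hne (support_eq_empty.1 habs))
  have hrep : aeval (vmap P) h = ∑ d ∈ h.support, monomial (Emap d) (coeff d h) := by
    conv_lhs => rw [← support_sum_monomial_coeff h]
    rw [map_sum]
    exact Finset.sum_congr rfl fun d _ => aeval_vmap_monomial d (coeff d h)
  have hco := congrArg (coeff (Emap d0)) (hrep.symm.trans h0)
  rw [coeff_zero, coeff_sum] at hco
  have hsum : ∑ d ∈ h.support, coeff (Emap d0) (monomial (Emap d) (coeff d h))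
      = coeff d0 h := by
    rw [Finset.sum_eq_single d0]
    · simp [coeff_monomial]
    · intro d hd hne'
      rw [coeff_monomial, if_neg]
      intro heq
      exact hne' (emap_injOn (Emap d none) d d0 (hchain d hd) (hchain d0 hd0) heq rfl)
    · intro habs; exact absurd hd0 habs
  rw [hsum] at hco
  exact (Finsupp.mem_support_iff.1 hd0) hco

theorem main (P : Type*) [PartialOrder P] [Fintype P] :
    RingHom.ker (aeval (vmap P) :
      MvPolynomial (J P) ℂ →ₐ[ℂ] MvPolynomial (Option P) ℂ)
    = Ideal.span (hibiSet P) := by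
  refine le_antisymm ?_ span_le_ker
  intro f hf
  choose s hs1 hs2 hs3 using fun d : J P →₀ ℕ => straighten (P := P) d
  set g : MvPolynomial (J P) ℂ := ∑ d ∈ f.support, monomial (s d) (coeff d f) with hg
  have hfg : f - g ∈ Ideal.span (hibiSet P) := by
    have hrepr : f - g = ∑ d ∈ f.support,
        C (coeff d f) * (monomial d 1 - monomial (s d) 1) := by
      conv_lhs => rw [← support_sum_monomial_coeff f]
      rw [hg, ← Finset.sum_sub_distrib]
      refine Finset.sum_congr rfl fun d _ => ?_
      rw [mul_sub, C_mul_monomial, C_mul_monomial, mul_one]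
    rw [hrepr]
    exact Ideal.sum_mem _ fun d _ => Ideal.mul_mem_left _ _ (hs3 d)
  have hgker : aeval (vmap P) g = 0 := by
    have h1 : aeval (vmap P) (f - g) = 0 := RingHom.mem_ker.1 (span_le_ker hfg)
    have h2 : aeval (vmap P) f = 0 := RingHom.mem_ker.1 hf
    rw [map_sub, h2, zero_sub, neg_eq_zero] at h1
    exact h1
  have hgchain : ∀ d ∈ g.support, ChainD d := by
    intro d hd
    rw [hg] at hd
    obtain ⟨d', -, hd'⟩ := Finset.mem_biUnion.1 (MvPolynomial.support_sum hd)
    have : d = s d' := by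
      have := support_monomial_subset hd'
      simpa using this
    rw [this]
    exact hs1 d'
  have hgz : g = 0 := chain_poly_eq_zero g hgchain hgker
  have : f = f - g := by rw [hgz, sub_zero]
  rw [this]
  exact hfg

end
end HibiAux

/-- The kernel of the monomial map `π : ℂ[p_τ : τ ∈ J(P)] → ℂ[t, x_u : u ∈ P]`,
`p_τ ↦ t·∏_{u ∈ τ} x_u`, is generated by the Hibi relations
`p_α p_β − p_{α∪β} p_{α∩β}` for incomparable order ideals `α, β`.  Thus the Hibi
algebra `A_{J(P)} = ℂ[J(P)]/ker π`, the homogeneous coordinate ring of the Hibi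
toric variety `ℙ_{Δ(P)}`, is defined by quadratic binomials. -/
theorem ker_hibi_monomial_map (P : Type*) [PartialOrder P] [Fintype P] :
    RingHom.ker
      (MvPolynomial.aeval
        (fun τ : {τ : Set P // IsLowerSet τ} =>
          (X (none : Option P) *
            ∏ u : P, X (some u) ^ Set.indicator (τ : Set P) (fun _ => (1 : ℕ)) u :
            MvPolynomial (Option P) ℂ)) :
        MvPolynomial {τ : Set P // IsLowerSet τ} ℂ →ₐ[ℂ] MvPolynomial (Option P) ℂ)
    = Ideal.span
        {f : MvPolynomial {τ : Set P // IsLowerSet τ} ℂ |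
          ∃ α β : {τ : Set P // IsLowerSet τ}, (¬ α ≤ β ∧ ¬ β ≤ α) ∧
            f = X α * X β
              - X (⟨(α : Set P) ∪ (β : Set P), α.2.union β.2⟩ :
                    {τ : Set P // IsLowerSet τ})
                * X (⟨(α : Set P) ∩ (β : Set P), α.2.inter β.2⟩ :
                    {τ : Set P // IsLowerSet τ})} := by
  exact HibiAux.main P
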